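/- Let (Q, μ) be a measure space and let K be a densely defined linear operator on L²(Q, μ; ℂ) with adjoint K*. Suppose Ψ₀ is in the domain of K, Ψ₀ is not the zero element, Ψ₀ is almost everywhere real-valued and nonnegative, and K Ψ₀ = k₀ · Ψ₀ for some complex number k₀. Then for every φ in the domain of K* that is almost everywhere real-valued with φ(q) > 0 for μ-almost every q, and for all real numbers a, b such that a · φ(q) ≤ Re((K* φ)(q)) ≤ b · φ(q) for μ-almost every q ∈ Q, one has a ≤ Re(k₀) ≤ b. -/

import Mathlib

open MeasureTheory
open scoped ComplexInnerProductSpace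

/-- If a densely defined operator `K` on `L²(Q, μ; ℂ)` has a nonzero
eigenvector `Ψ₀` which is a.e. real-valued and nonnegative, with eigenvalue `k₀ ∈ ℂ`,
then for every a.e. real-valued, a.e. strictly positive `φ` in the domain of the
adjoint `K*`, and all `a b : ℝ` with `a · φ ≤ Re (K* φ) ≤ b · φ` a.e.,
one has `a ≤ Re k₀ ≤ b`. -/
theorem re_eigenvalue_bounds_of_nonneg_eigenvector_nonsym
    {Q : Type*} [MeasurableSpace Q] (μ : Measure Q)
    (K : Lp ℂ 2 μ →ₗ.[ℂ] Lp ℂ 2 μ) (hK : Dense (K.domain : Set (Lp ℂ 2 μ)))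
    (Ψ₀ : K.domain) (hΨ₀ne : (Ψ₀ : Lp ℂ 2 μ) ≠ 0)
    (hΨ₀real : ∀ᵐ q ∂μ, (((Ψ₀ : Lp ℂ 2 μ) : Q → ℂ) q).im = 0)
    (hΨ₀nonneg : ∀ᵐ q ∂μ, 0 ≤ (((Ψ₀ : Lp ℂ 2 μ) : Q → ℂ) q).re)
    (k₀ : ℂ) (heig : K Ψ₀ = k₀ • (Ψ₀ : Lp ℂ 2 μ))
    (φ : K.adjoint.domain)
    (hφreal : ∀ᵐ q ∂μ, (((φ : Lp ℂ 2 μ) : Q → ℂ) q).im = 0)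
    (hφpos : ∀ᵐ q ∂μ, 0 < (((φ : Lp ℂ 2 μ) : Q → ℂ) q).re)
    (a b : ℝ)
    (hab : ∀ᵐ q ∂μ,
      a * (((φ : Lp ℂ 2 μ) : Q → ℂ) q).re ≤ ((K.adjoint φ : Q → ℂ) q).re ∧
      ((K.adjoint φ : Q → ℂ) q).re ≤ b * (((φ : Lp ℂ 2 μ) : Q → ℂ) q).re) :
    a ≤ k₀.re ∧ k₀.re ≤ b := by
  set f : Q → ℂ := ((φ : Lp ℂ 2 μ) : Q → ℂ) with hf
  set g : Q → ℂ := ((Ψ₀ : Lp ℂ 2 μ) : Q → ℂ) with hg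
  set u : Q → ℂ := ((K.adjoint φ : Lp ℂ 2 μ) : Q → ℂ) with hu
  -- key identity from the adjoint relation and the eigenvalue equation
  have key : ⟪((K.adjoint φ : Lp ℂ 2 μ)), ((Ψ₀ : Lp ℂ 2 μ))⟫
      = k₀ * ⟪((φ : Lp ℂ 2 μ)), ((Ψ₀ : Lp ℂ 2 μ))⟫ := by
    have h := (LinearPMap.adjoint_isFormalAdjoint hK) φ Ψ₀
    rw [h, heig, inner_smul_right]
  -- integrability of pointwise inner products
  have hint_fg : Integrable (fun q => ⟪f q, g q⟫) μ :=
    L2.integrable_inner  (φ : Lp ℂ 2 μ) (Ψ₀ : Lp ℂ 2 μ)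
  have hint_ug : Integrable (fun q => ⟪u q, g q⟫) μ :=
    L2.integrable_inner  (K.adjoint φ : Lp ℂ 2 μ) (Ψ₀ : Lp ℂ 2 μ)
  -- pointwise inner products are a.e. real products
  have hae_fg : (fun q => ⟪f q, g q⟫) =ᵐ[μ] fun q => ((f q).re * (g q).re : ℂ) := by
    filter_upwards [hφreal, hΨ₀real] with q h1 h2
    simp only [RCLike.inner_apply]
    apply Complex.ext <;>
      simp [Complex.mul_re, Complex.mul_im, h1, h2, mul_comm]
  have hae_ug : (fun q => (⟪u q, g q⟫ : ℂ).re) =ᵐ[μ] fun q => (u q).re * (g q).re := by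
    filter_upwards [hΨ₀real] with q h2
    simp [RCLike.inner_apply, Complex.mul_re, h2, mul_comm]
  have hre_fg : Integrable (fun q => (f q).re * (g q).re) μ := by
    have := hint_fg.congr hae_fg
    have h2 := this.re
    simpa using h2
  have hre_ug : Integrable (fun q => (u q).re * (g q).re) μ := by
    have h2 := hint_ug.re
    exact (Integrable.congr (by simpa using h2) hae_ug)
  -- express the inner products as real integrals
  have hinner_fg : ⟪((φ : Lp ℂ 2 μ)), ((Ψ₀ : Lp ℂ 2 μ))⟫
      = ((∫ q, (f q).re * (g q).re ∂μ : ℝ) : ℂ) := by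
    rw [L2.inner_def, integral_congr_ae hae_fg]
    rw [show (fun q => ((f q).re * (g q).re : ℂ)) = fun q => (((f q).re * (g q).re : ℝ) : ℂ) by
      norm_num]
    exact integral_ofReal
  have hinner_ug : (⟪((K.adjoint φ : Lp ℂ 2 μ)), ((Ψ₀ : Lp ℂ 2 μ))⟫ : ℂ).re
      = ∫ q, (u q).re * (g q).re ∂μ := by
    rw [L2.inner_def (𝕜 := ℂ), ← integral_congr_ae hae_ug]
    have h3 : ∫ q, (⟪u q, g q⟫ : ℂ).re ∂μ = (∫ q, (⟪u q, g q⟫ : ℂ) ∂μ).re := by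
      simpa using integral_re hint_ug
    exact h3.symm
  set I : ℝ := ∫ q, (f q).re * (g q).re ∂μ with hI
  set J : ℝ := ∫ q, (u q).re * (g q).re ∂μ with hJ
  -- positivity of I
  have hnn : 0 ≤ᵐ[μ] fun q => (f q).re * (g q).re := by
    filter_upwards [hφpos, hΨ₀nonneg] with q h1 h2
    exact mul_nonneg h1.le h2
  have hIne : I ≠ 0 := by
    intro h0
    have := (integral_eq_zero_iff_of_nonneg_ae hnn hre_fg).mp h0
    have hg0 : g =ᵐ[μ] 0 := by
      filter_upwards [this, hφpos, hΨ₀real, hΨ₀nonneg] with q hq h1 h2 h3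
      have : (g q).re = 0 := by
        rcases mul_eq_zero.mp hq with h | h
        · exact absurd h h1.ne'
        · exact h
      apply Complex.ext <;> simp [this, h2]
    exact hΨ₀ne (Lp.eq_zero_iff_ae_eq_zero.mpr hg0)
  have hIpos : 0 < I := (integral_nonneg_of_ae hnn).lt_of_ne' hIne
  -- J = k₀.re * I
  have hJ_eq : J = k₀.re * I := by
    have h : (⟪((K.adjoint φ : Lp ℂ 2 μ)), ((Ψ₀ : Lp ℂ 2 μ))⟫ : ℂ) = k₀ * (I : ℂ) := by
      rw [key, hinner_fg]
    have h2 := congrArg Complex.re h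
    rw [hinner_ug] at h2
    simpa [Complex.mul_re] using h2
  -- bounds on J
  have hJa : a * I ≤ J := by
    rw [hI, ← integral_const_mul]
    refine integral_mono_ae (hre_fg.const_mul a) hre_ug ?_
    filter_upwards [hab, hΨ₀nonneg] with q hq h2
    calc a * ((f q).re * (g q).re) = (a * (f q).re) * (g q).re := by ring
    _ ≤ (u q).re * (g q).re := mul_le_mul_of_nonneg_right hq.1 h2
  have hJb : J ≤ b * I := by
    rw [hI, ← integral_const_mul]
    refine integral_mono_ae hre_ug (hre_fg.const_mul b) ?_
    filter_upwards [hab, hΨ₀nonneg] with q hq h2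
    calc (u q).re * (g q).re ≤ (b * (f q).re) * (g q).re :=
      mul_le_mul_of_nonneg_right hq.2 h2
    _ = b * ((f q).re * (g q).re) := by ring
  rw [hJ_eq] at hJa hJb
  exact ⟨le_of_mul_le_mul_right hJa hIpos, le_of_mul_le_mul_right hJb hIpos⟩
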